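/- Let G and G' be finitely generated groups, let H₁,…,Hₘ be subgroups of G and H₁',…,Hₘ' subgroups of G'. Then the following are equivalent: (1) the collections of isomorphism classes of finite quotients marked with the images of the Hᵢ (up to conjugacy) coincide, i.e. {[G/U; H₁U/U, …, HₘU/U] : U ◁_f G} = {[G'/V; H₁'V/V, …, Hₘ'V/V] : V ◁_f G'}; (2) there is an isomorphism of profinite groups f : Ĝ → Ĝ' such that f(cl(Hᵢ)) is conjugate to cl(Hᵢ') in Ĝ' for each i. -/

import Mathlib

universe u

section Completion

variable (G : Type u) [Group G]

/-- The index type: finite-index normal subgroups of `G`. -/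
def FIN (G : Type u) [Group G] : Type u :=
  {N : Subgroup G // N.Normal ∧ N.FiniteIndex}

instance (N : FIN G) : N.1.Normal := N.2.1

instance (N : FIN G) : TopologicalSpace (G ⧸ N.1) := ⊥

instance (N : FIN G) : DiscreteTopology (G ⧸ N.1) := ⟨rfl⟩

instance (N : FIN G) : IsTopologicalGroup (G ⧸ N.1) where
  continuous_mul := continuous_of_discreteTopology
  continuous_inv := continuous_of_discreteTopology

/-- The profinite completion of `G`: the subgroup of compatible families in the
product of all the finite quotients of `G`, topologized as a closed subgroup of the
product of the (discrete) finite quotients. -/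
def completionSubgroup : Subgroup (∀ N : FIN G, G ⧸ N.1) where
  carrier := {x | ∀ (N M : FIN G) (h : N.1 ≤ M.1),
    QuotientGroup.map N.1 M.1 (MonoidHom.id G)
      (by rw [Subgroup.comap_id]; exact h) (x N) = x M}
  one_mem' := by
    intro N M h
    simp only [Pi.one_apply, map_one]
  mul_mem' := by
    intro a b ha hb N M h
    simp only [Pi.mul_apply, map_mul, ha N M h, hb N M h]
  inv_mem' := by
    intro a ha N M h
    simp only [Pi.inv_apply, map_inv, ha N M h]

/-- The canonical map from `G` to its profinite completion. -/
def iota : G →* completionSubgroup G where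
  toFun g := ⟨fun N => QuotientGroup.mk g, by
    intro N M h
    rfl⟩
  map_one' := by
    apply Subtype.ext
    funext N
    rfl
  map_mul' g h := by
    apply Subtype.ext
    funext N
    rfl

end Completion


section Aux

open scoped Pointwise

variable {G : Type u} [Group G]

instance FIN.finiteQuotient (N : FIN G) : Finite (G ⧸ N.1) :=
  haveI : N.1.FiniteIndex := N.2.2
  Subgroup.finite_quotient_of_finiteIndex

instance : Nonempty (FIN G) :=
  ⟨⟨⊤, inferInstance, Subgroup.instFiniteIndexTop⟩⟩

theorem normal_iInf' {ι : Sort*} {f : ι → Subgroup G} (h : ∀ i, (f i).Normal) :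
    (⨅ i, f i).Normal := by
  constructor
  intro n hn g
  rw [Subgroup.mem_iInf] at hn ⊢
  exact fun i => (h i).conj_mem _ (hn i) g

/-- Infimum of two elements of `FIN G`. -/
def FIN.inf (N M : FIN G) : FIN G :=
  ⟨N.1 ⊓ M.1,
    haveI := N.2.1; haveI := M.2.1; Subgroup.normal_inf_normal _ _,
    haveI := N.2.2; haveI := M.2.2; inferInstance⟩

theorem FIN.inf_le_left (N M : FIN G) : (FIN.inf N M).1 ≤ N.1 := _root_.inf_le_left

theorem FIN.inf_le_right (N M : FIN G) : (FIN.inf N M).1 ≤ M.1 := _root_.inf_le_right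

/-- The projection from the completion to a finite quotient. -/
def proj (N : FIN G) : completionSubgroup G →* G ⧸ N.1 :=
  (Pi.evalMonoidHom (fun N : FIN G => G ⧸ N.1) N).comp (completionSubgroup G).subtype

@[simp] theorem proj_apply (N : FIN G) (x : completionSubgroup G) : proj N x = x.1 N := rfl

theorem continuous_proj (N : FIN G) : Continuous (proj N) :=
  (continuous_apply N).comp continuous_subtype_val

theorem proj_iota (N : FIN G) (g : G) : proj N (iota G g) = QuotientGroup.mk g := rfl

theorem compat_apply (x : completionSubgroup G) {N M : FIN G} (h : N.1 ≤ M.1) :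
    QuotientGroup.map N.1 M.1 (MonoidHom.id G)
      (by rw [Subgroup.comap_id]; exact h) (x.1 N) = x.1 M :=
  x.2 N M h

theorem denseRange_iota : DenseRange (iota G) := by
  intro x
  rw [mem_closure_iff]
  intro o ho hxo
  obtain ⟨V, hV, rfl⟩ := isOpen_induced_iff.mp ho
  obtain ⟨I, u, hu, hsub⟩ := isOpen_pi_iff.mp hV x.1 hxo
  classical
  have hnorm : (⨅ N ∈ I, N.1 : Subgroup G).Normal :=
    normal_iInf' fun N => normal_iInf' fun _ => N.2.1
  have hfi : (⨅ N ∈ I, N.1 : Subgroup G).FiniteIndex :=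
    Subgroup.finiteIndex_iInf' (fun N : FIN G => N.1) (fun N _ => N.2.2)
  set M : FIN G := ⟨⨅ N ∈ I, N.1, hnorm, hfi⟩ with hM
  obtain ⟨g, hg⟩ := QuotientGroup.mk_surjective (x.1 M)
  refine ⟨iota G g, ?_, ⟨g, rfl⟩⟩
  show (iota G g).1 ∈ V
  apply hsub
  intro N hN
  have hle : M.1 ≤ N.1 := biInf_le _ hN
  have := compat_apply x hle
  rw [← hg] at this
  have h2 : (iota G g).1 N = x.1 N := by
    rw [← this]
    rfl
  rw [h2]
  exact (hu N hN).2

theorem isClosed_completionSubgroup :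
    IsClosed ((completionSubgroup G : Set (∀ N : FIN G, G ⧸ N.1))) := by
  have : (completionSubgroup G : Set (∀ N : FIN G, G ⧸ N.1)) =
      ⋂ (N : FIN G) (M : FIN G) (h : N.1 ≤ M.1),
        {x | QuotientGroup.map N.1 M.1 (MonoidHom.id G)
          (by rw [Subgroup.comap_id]; exact h) (x N) = x M} := by
    ext x
    simp only [Set.mem_iInter, Set.mem_setOf_eq]
    rfl
  rw [this]
  refine isClosed_iInter fun N => isClosed_iInter fun M => isClosed_iInter fun h => ?_
  exact isClosed_eq (continuous_of_discreteTopology.comp (continuous_apply N))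
    (continuous_apply M)

instance : CompactSpace (completionSubgroup G) :=
  isCompact_iff_compactSpace.mp isClosed_completionSubgroup.isCompact

theorem image_closure_discrete {X Y : Type*} [TopologicalSpace X] [TopologicalSpace Y]
    [DiscreteTopology Y] {f : X → Y} (hf : Continuous f) (s : Set X) :
    f '' closure s = f '' s :=
  subset_antisymm
    ((image_closure_subset_closure_image hf).trans (isClosed_discrete _).closure_subset)
    (Set.image_mono subset_closure)

theorem mem_of_forall_proj {A : Set (completionSubgroup G)} (hA : IsCompact A)
    (hAc : IsClosed A) (x : completionSubgroup G)
    (h : ∀ N : FIN G, ∃ a ∈ A, a.1 N = x.1 N) : x ∈ A := by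
  set F : FIN G → Set (completionSubgroup G) := fun N => A ∩ {a | a.1 N = x.1 N} with hF
  have hclosed : ∀ N, IsClosed (F N) := fun N =>
    hAc.inter (isClosed_eq ((continuous_apply N).comp continuous_subtype_val)
      continuous_const)
  have hcompact : ∀ N, IsCompact (F N) := fun N =>
    hA.inter_right (isClosed_eq ((continuous_apply N).comp continuous_subtype_val)
      continuous_const)
  have hne : ∀ N, (F N).Nonempty := fun N => by
    obtain ⟨a, ha, ha'⟩ := h N
    exact ⟨a, ha, ha'⟩
  have hdir : Directed (· ⊇ ·) F := by
    intro N M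
    refine ⟨FIN.inf N M, ?_, ?_⟩
    · rintro a ⟨haA, hak⟩
      refine ⟨haA, ?_⟩
      have h1 := compat_apply a (FIN.inf_le_left N M)
      have h2 := compat_apply x (FIN.inf_le_left N M)
      simp only [Set.mem_setOf_eq] at hak ⊢
      rw [← h1, hak, h2]
    · rintro a ⟨haA, hak⟩
      refine ⟨haA, ?_⟩
      have h1 := compat_apply a (FIN.inf_le_right N M)
      have h2 := compat_apply x (FIN.inf_le_right N M)
      simp only [Set.mem_setOf_eq] at hak ⊢
      rw [← h1, hak, h2]
  obtain ⟨a, ha⟩ := IsCompact.nonempty_iInter_of_directed_nonempty_isCompact_isClosed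
    F hdir hne hcompact hclosed
  simp only [Set.mem_iInter] at ha
  have : a = x := Subtype.ext (funext fun N => (ha N).2)
  rw [← this]
  exact (ha (Classical.arbitrary _)).1



theorem finite_monoidHom (G : Type*) (Q : Type*) [Group G] [Group.FG G] [Group Q]
    [Finite Q] : Finite (G →* Q) := by
  obtain ⟨S, hS, hSfin⟩ := Group.fg_iff.mp ‹Group.FG G›
  haveI := hSfin.to_subtype
  refine Finite.of_injective (fun f => (fun s : S => f s.1)) ?_
  intro f g hfg
  apply MonoidHom.eq_of_eqOn_dense hS
  intro x hx
  exact congrFun hfg ⟨x, hx⟩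

/-- The kernel of a homomorphism to a finite group, as an element of `FIN G`. -/
def kerFIN {Q : Type*} [Group Q] [Finite Q] (ψ : G →* Q) : FIN G :=
  ⟨ψ.ker, inferInstance, Subgroup.finiteIndex_ker ψ⟩

/-- Extension of a homomorphism to a finite group to the profinite completion. -/
noncomputable def extHom {Q : Type*} [Group Q] [Finite Q] (ψ : G →* Q) :
    completionSubgroup G →* Q :=
  (QuotientGroup.lift (kerFIN ψ).1 ψ (fun _ hg => hg)).comp (proj (kerFIN ψ))

@[simp] theorem extHom_iota {Q : Type*} [Group Q] [Finite Q] (ψ : G →* Q) (g : G) :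
    extHom ψ (iota G g) = ψ g := rfl

theorem continuous_extHom {Q : Type*} [Group Q] [Finite Q] [TopologicalSpace Q]
    [DiscreteTopology Q] (ψ : G →* Q) : Continuous (extHom ψ) := by
  have h : ⇑(extHom ψ) =
      (QuotientGroup.lift (kerFIN ψ).1 ψ (fun _ hg => hg)) ∘ ⇑(proj (kerFIN ψ)) := rfl
  rw [h]
  exact continuous_of_discreteTopology.comp (continuous_proj (kerFIN ψ))

end Aux

section LimMap

variable {G G' : Type u} [Group G] [Group G']

/-- The map of completions induced by a compatible family. -/
noncomputable def limMap (ψ : ∀ N' : FIN G', G →* G' ⧸ N'.1)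
    (hcompat : ∀ (N' M' : FIN G') (h : N'.1 ≤ M'.1) (g : G),
      QuotientGroup.map N'.1 M'.1 (MonoidHom.id G')
        (by rw [Subgroup.comap_id]; exact h) (ψ N' g) = ψ M' g) :
    completionSubgroup G →* completionSubgroup G' where
  toFun x := ⟨fun N' => extHom (ψ N') x, by
    intro N' M' h
    have key : (fun y : completionSubgroup G =>
        QuotientGroup.map N'.1 M'.1 (MonoidHom.id G')
          (by rw [Subgroup.comap_id]; exact h) (extHom (ψ N') y)) = extHom (ψ M') := by
      apply Continuous.ext_on denseRange_iota
      · exact continuous_of_discreteTopology.comp (continuous_extHom (ψ N'))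
      · exact continuous_extHom (ψ M')
      · rintro _ ⟨g, rfl⟩
        simp only [extHom_iota]
        exact hcompat N' M' h g
    exact congrFun key x⟩
  map_one' := by
    apply Subtype.ext; funext N'; simp only [map_one]; rfl
  map_mul' x y := by
    apply Subtype.ext; funext N'; simp only [map_mul]; rfl

theorem limMap_apply (ψ : ∀ N' : FIN G', G →* G' ⧸ N'.1) (hcompat) (x : completionSubgroup G)
    (N' : FIN G') : (limMap ψ hcompat x).1 N' = extHom (ψ N') x := rfl

theorem limMap_iota (ψ : ∀ N' : FIN G', G →* G' ⧸ N'.1) (hcompat) (g : G) (N' : FIN G') :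
    (limMap ψ hcompat (iota G g)).1 N' = ψ N' g := rfl

theorem continuous_limMap (ψ : ∀ N' : FIN G', G →* G' ⧸ N'.1) (hcompat) :
    Continuous (limMap ψ hcompat) := by
  apply Continuous.subtype_mk
  exact continuous_pi fun N' => continuous_extHom (ψ N')

theorem surjective_limMap (ψ : ∀ N' : FIN G', G →* G' ⧸ N'.1) (hcompat)
    (hsurj : ∀ N', Function.Surjective (ψ N')) :
    Function.Surjective (limMap ψ hcompat) := by
  intro x
  have hrange : x ∈ Set.range (limMap ψ hcompat) := by
    apply mem_of_forall_proj (isCompact_range (continuous_limMap ψ hcompat))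
      (isCompact_range (continuous_limMap ψ hcompat)).isClosed
    intro N'
    obtain ⟨g, hg⟩ := hsurj N' (x.1 N')
    exact ⟨limMap ψ hcompat (iota G g), ⟨iota G g, rfl⟩, by rw [limMap_iota]; exact hg⟩
  exact hrange

end LimMap

section Hopf

variable {G : Type u} [Group G]

/-- Conjugating permutations by an equivalence, as a monoid hom. -/
def permCongrHom {α β : Type*} (e : α ≃ β) : Equiv.Perm α →* Equiv.Perm β where
  toFun p := (e.symm.trans p).trans e
  map_one' := by ext x; simp
  map_mul' p q := by ext x; simp

/-- The embedding of subgroups of index `k` into pointed permutation representations. -/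
noncomputable def subgroupEmbed {G : Type*} [Group G] (k : ℕ) (hk : k ≠ 0)
    (H : {H : Subgroup G // H.index = k}) : (G →* Equiv.Perm (Fin k)) × Fin k :=
  let h : Nat.card (G ⧸ H.1) = k := H.2
  let e : (G ⧸ H.1) ≃ Fin k :=
    (Nat.equivFinOfCardPos (by rw [h]; exact hk)).trans (finCongr h)
  ⟨(permCongrHom e).comp (MulAction.toPermHom G (G ⧸ H.1)), e (QuotientGroup.mk (1 : G))⟩

theorem subgroupEmbed_mem_iff {G : Type*} [Group G] (k : ℕ) (hk : k ≠ 0)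
    (H : {H : Subgroup G // H.index = k}) (g : G) :
    ((subgroupEmbed k hk H).1 g) (subgroupEmbed k hk H).2 = (subgroupEmbed k hk H).2
      ↔ g ∈ H.1 := by
  have h1 : (MulAction.toPermHom G (G ⧸ H.1)) g (QuotientGroup.mk (1 : G)) =
      QuotientGroup.mk g := by
    show g • ((1 : G) : G ⧸ H.1) = _
    rw [MulAction.Quotient.smul_mk, smul_eq_mul, mul_one]
  unfold subgroupEmbed
  simp only [MonoidHom.comp_apply, permCongrHom, MonoidHom.coe_mk, OneHom.coe_mk,
    Equiv.coe_trans, Function.comp_apply, Equiv.trans_apply, Equiv.symm_trans_apply, Equiv.symm_apply_apply,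
    EmbeddingLike.apply_eq_iff_eq]
  rw [h1, QuotientGroup.eq]
  simp

theorem finite_subgroups_of_index_eq (G : Type*) [Group G] [Group.FG G] (k : ℕ)
    (hk : k ≠ 0) : Finite {H : Subgroup G // H.index = k} := by
  haveI : Finite (G →* Equiv.Perm (Fin k)) := finite_monoidHom G _
  refine Finite.of_injective (subgroupEmbed k hk) ?_
  intro H₁ H₂ hEq
  refine Subtype.ext (Subgroup.ext fun g => ?_)
  rw [← subgroupEmbed_mem_iff k hk H₁ g, ← subgroupEmbed_mem_iff k hk H₂ g, hEq]

theorem open_subgroup_eq_closure (K : Subgroup (completionSubgroup G))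
    (hK : IsOpen (K : Set (completionSubgroup G))) :
    (K : Set (completionSubgroup G)) =
      closure (iota G '' (K.comap (iota G) : Set G)) := by
  apply subset_antisymm
  · intro x hx
    rw [mem_closure_iff]
    intro o ho hxo
    obtain ⟨y, ⟨hyo, hyK⟩, g, rfl⟩ :=
      denseRange_iota.inter_open_nonempty (o ∩ K) (ho.inter hK) ⟨x, hxo, hx⟩
    exact ⟨iota G g, hyo, ⟨g, hyK, rfl⟩⟩
  · exact closure_minimal (by rintro _ ⟨g, hg, rfl⟩; exact hg)
      (Subgroup.isClosed_of_isOpen _ hK)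

theorem comap_iota_injective {K₁ K₂ : Subgroup (completionSubgroup G)}
    (h1 : IsOpen (K₁ : Set (completionSubgroup G)))
    (h2 : IsOpen (K₂ : Set (completionSubgroup G)))
    (h : K₁.comap (iota G) = K₂.comap (iota G)) : K₁ = K₂ := by
  apply SetLike.coe_injective
  rw [open_subgroup_eq_closure K₁ h1, open_subgroup_eq_closure K₂ h2, h]

theorem comap_iota_index_bound {K : Subgroup (completionSubgroup G)} {n : ℕ} (hn : n ≠ 0)
    (hnorm : K.Normal) (hidx : K.index = n) :
    (K.comap (iota G)).index ≠ 0 ∧ (K.comap (iota G)).index ≤ n := by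
  haveI := hnorm
  haveI : K.FiniteIndex := ⟨by rw [hidx]; exact hn⟩
  haveI : (K.comap (iota G)).Normal := hnorm.comap _
  set j : (G ⧸ K.comap (iota G)) →* (completionSubgroup G ⧸ K) :=
    QuotientGroup.map (K.comap (iota G)) K (iota G) le_rfl with hj
  have hjinj : Function.Injective j := by
    rw [injective_iff_map_eq_one]
    intro a
    induction a using QuotientGroup.induction_on with
    | H g =>
      intro hg
      rw [hj, QuotientGroup.map_mk, QuotientGroup.eq_one_iff] at hg
      rw [QuotientGroup.eq_one_iff]
      exact hg
  haveI : Finite (completionSubgroup G ⧸ K) := Subgroup.finite_quotient_of_finiteIndex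
  haveI : Finite (G ⧸ K.comap (iota G)) := Finite.of_injective j hjinj
  constructor
  · exact Nat.card_ne_zero.mpr ⟨⟨1⟩, inferInstance⟩
  · calc (K.comap (iota G)).index = Nat.card (G ⧸ K.comap (iota G)) := rfl
      _ ≤ Nat.card (completionSubgroup G ⧸ K) := Nat.card_le_card_of_injective j hjinj
      _ = n := hidx

theorem finite_open_normal_subgroups [Group.FG G] (n : ℕ) (hn : n ≠ 0) :
    Finite {K : Subgroup (completionSubgroup G) //
      IsOpen (K : Set (completionSubgroup G)) ∧ K.Normal ∧ K.index = n} := by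
  classical
  set S : Set (Subgroup G) := {H | H.index ≠ 0 ∧ H.index ≤ n} with hS
  have hSfin : S.Finite := by
    have hsub : S ⊆ ⋃ k ∈ Finset.Icc 1 n, {H : Subgroup G | H.index = k} := by
      rintro H ⟨h0, hle⟩
      exact Set.mem_biUnion (Finset.mem_Icc.mpr ⟨Nat.one_le_iff_ne_zero.mpr h0, hle⟩) rfl
    refine Set.Finite.subset (Set.Finite.biUnion (Finset.Icc 1 n).finite_toSet
      fun k hk => ?_) hsub
    exact Set.finite_coe_iff.mp (finite_subgroups_of_index_eq G k
      (Nat.one_le_iff_ne_zero.mp (Finset.mem_Icc.mp hk).1))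
  haveI := hSfin.to_subtype
  refine Finite.of_injective (fun K => (⟨K.1.comap (iota G),
    (comap_iota_index_bound hn K.2.2.1 K.2.2.2).1,
    (comap_iota_index_bound hn K.2.2.1 K.2.2.2).2⟩ : S)) ?_
  intro K₁ K₂ hK
  exact Subtype.ext (comap_iota_injective K₁.2.1 K₂.2.1 (congrArg Subtype.val hK))

theorem injective_of_continuous_surjective [Group.FG G]
    (h : completionSubgroup G →* completionSubgroup G) (hc : Continuous h)
    (hs : Function.Surjective h) : Function.Injective h := by
  rw [injective_iff_map_eq_one]
  intro x hx1
  by_contra hne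
  have hxN : ∃ N : FIN G, x.1 N ≠ 1 := by
    by_contra hall; push_neg at hall
    exact hne (Subtype.ext (funext fun N => hall N))
  obtain ⟨N, hN⟩ := hxN
  set K₀ := (proj (G := G) N).ker with hK₀
  have hK₀open : IsOpen (K₀ : Set (completionSubgroup G)) := by
    have : (K₀ : Set (completionSubgroup G)) = (proj N) ⁻¹' {1} := rfl
    rw [this]
    exact (isOpen_discrete _).preimage (continuous_proj N)
  haveI : Finite (proj (G := G) N).range := Subtype.finite
  haveI hK₀fi : K₀.FiniteIndex := Subgroup.finiteIndex_ker _
  set n := K₀.index with hn'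
  have hn : n ≠ 0 := hK₀fi.index_ne_zero
  haveI := finite_open_normal_subgroups (G := G) n hn
  set Ω := {K : Subgroup (completionSubgroup G) //
      IsOpen (K : Set (completionSubgroup G)) ∧ K.Normal ∧ K.index = n} with hΩ
  set Φ : Ω → Ω := fun K => ⟨K.1.comap h,
    K.2.1.preimage hc, K.2.2.1.comap h,
    by rw [Subgroup.index_comap_of_surjective _ hs]; exact K.2.2.2⟩ with hΦ
  have hΦinj : Function.Injective Φ := by
    intro K₁ K₂ hK
    have : K₁.1.comap h = K₂.1.comap h := congrArg Subtype.val hK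
    apply Subtype.ext
    rw [← Subgroup.map_comap_eq_self_of_surjective hs K₁.1,
      ← Subgroup.map_comap_eq_self_of_surjective hs K₂.1, this]
  have hΦsurj := Finite.injective_iff_surjective.mp hΦinj
  obtain ⟨K, hK⟩ := hΦsurj ⟨K₀, hK₀open, inferInstance, rfl⟩
  have hKK₀ : K.1.comap h = K₀ := congrArg Subtype.val hK
  have hxK₀ : x ∈ K₀ := by
    rw [← hKK₀]
    show h x ∈ K.1
    rw [hx1]
    exact K.1.one_mem
  exact hN hxK₀

end Hopf

section Family

/-- Homomorphism-like functions. -/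
def IsHomFun {A B : Type*} [Group A] [Group B] (f : A → B) : Prop :=
  ∀ x y, f (x * y) = f x * f y

theorem setFinite_homFun (G : Type*) [Group G] [Group.FG G] (Q : Type*) [Group Q]
    [Finite Q] : {f : G → Q | IsHomFun f}.Finite := by
  haveI := finite_monoidHom G Q
  rw [← Set.finite_coe_iff]
  exact Finite.of_injective (fun f => MonoidHom.mk' f.1 f.2)
    (fun f g h => Subtype.ext (funext fun x => DFunLike.congr_fun h x))

variable {G' : Type u} [Group G']

/-- The transition map between finite quotients. -/
def qmapHom (N' M' : FIN G') (h : N'.1 ≤ M'.1) : (G' ⧸ N'.1) →* (G' ⧸ M'.1) :=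
  QuotientGroup.map N'.1 M'.1 (MonoidHom.id G') (by rw [Subgroup.comap_id]; exact h)

@[simp] theorem qmapHom_mk (N' M' : FIN G') (h : N'.1 ≤ M'.1) (g : G') :
    qmapHom N' M' h (QuotientGroup.mk g) = QuotientGroup.mk g := rfl

theorem qmapHom_trans {A B C : FIN G'} (hAB : A.1 ≤ B.1) (hBC : B.1 ≤ C.1)
    (x : G' ⧸ A.1) : qmapHom B C hBC (qmapHom A B hAB x) = qmapHom A C (hAB.trans hBC) x := by
  induction x using QuotientGroup.induction_on
  rfl

theorem qmapHom_surjective (N' M' : FIN G') (h : N'.1 ≤ M'.1) :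
    Function.Surjective (qmapHom N' M' h) := by
  intro y
  induction y using QuotientGroup.induction_on with
  | H g => exact ⟨QuotientGroup.mk g, rfl⟩

theorem qmapHom_comp_mk (N' M' : FIN G') (h : N'.1 ≤ M'.1) :
    (qmapHom N' M' h).comp (QuotientGroup.mk' N'.1) = QuotientGroup.mk' M'.1 := by
  ext g
  rfl

theorem compat_eq_qmapHom (x : completionSubgroup G') {N M : FIN G'} (h : N.1 ≤ M.1) :
    qmapHom N M h (x.1 N) = x.1 M := x.2 N M h

theorem map_conj_comm {A B : Type*} [Group A] [Group B] (F : A →* B) (c : A)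
    (X : Subgroup A) :
    Subgroup.map F (Subgroup.map (MulAut.conj c).toMonoidHom X) =
      Subgroup.map (MulAut.conj (F c)).toMonoidHom (Subgroup.map F X) := by
  rw [Subgroup.map_map, Subgroup.map_map]
  congr 1
  ext x
  simp

theorem conj_flip {A : Type*} [Group A] {c : A} {X Y : Subgroup A}
    (h : X = Subgroup.map (MulAut.conj c).toMonoidHom Y) :
    Y = Subgroup.map (MulAut.conj c⁻¹).toMonoidHom X := by
  subst h
  rw [Subgroup.map_map]
  have : ((MulAut.conj c⁻¹).toMonoidHom.comp (MulAut.conj c).toMonoidHom) =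
      MonoidHom.id A := by
    ext x
    simp
    group
  rw [this, Subgroup.map_id]


variable (G : Type u) [Group G] (m : ℕ)

/-- The ambient compact space for the compactness argument. -/
abbrev FamX (G'' : Type u) [Group G''] : Type u :=
  (∀ N' : FIN G'', G → G'' ⧸ N'.1) × (Fin m → ∀ N' : FIN G'', G'' ⧸ N'.1)

/-- The index of constraints. -/
abbrev FamI (m : ℕ) (G'' : Type u) [Group G''] : Type u :=
  FIN G'' ⊕ (FIN G'' × FIN G'') ⊕ (Fin m × FIN G'') ⊕ (Fin m × FIN G'' × FIN G'')

variable {G'' : Type u} [Group G''] (H : Fin m → Subgroup G) (H' : Fin m → Subgroup G'')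

/-- The constraint sets. -/
def famCond : FamI m G'' → Set (FamX G m G'')
  | Sum.inl N' => {p | IsHomFun (p.1 N') ∧ Function.Surjective (p.1 N')}
  | Sum.inr (Sum.inl (N₁, N₂)) =>
      {p | ∀ (h : N₁.1 ≤ N₂.1) (g : G), qmapHom N₁ N₂ h (p.1 N₁ g) = p.1 N₂ g}
  | Sum.inr (Sum.inr (Sum.inl (i, N'))) =>
      {p | ∃ hf : IsHomFun (p.1 N'), (H i).map (MonoidHom.mk' (p.1 N') hf) =
        Subgroup.map (MulAut.conj (p.2 i N')).toMonoidHom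
          ((H' i).map (QuotientGroup.mk' N'.1))}
  | Sum.inr (Sum.inr (Sum.inr (i, N₁, N₂))) =>
      {p | ∀ (h : N₁.1 ≤ N₂.1), qmapHom N₁ N₂ h (p.2 i N₁) = p.2 i N₂}

theorem famCond_isClosed [Group.FG G] (i : FamI m G'') :
    IsClosed (famCond G m H H' i) := by
  rcases i with N' | ⟨N₁, N₂⟩ | ⟨i, N'⟩ | ⟨i, N₁, N₂⟩
  · show IsClosed ((fun p : FamX G m G'' => p.1 N') ⁻¹'
      {f | IsHomFun f ∧ Function.Surjective f})
    refine IsClosed.preimage ((continuous_apply N').comp continuous_fst) ?_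
    exact Set.Finite.isClosed (Set.Finite.subset (setFinite_homFun G _) (fun f hf => hf.1))
  · have : famCond G m H H' (Sum.inr (Sum.inl (N₁, N₂))) =
        ⋂ (h : N₁.1 ≤ N₂.1) (g : G),
          {p : FamX G m G'' | qmapHom N₁ N₂ h (p.1 N₁ g) = p.1 N₂ g} := by
      ext p
      simp only [famCond, Set.mem_iInter, Set.mem_setOf_eq]
    rw [this]
    refine isClosed_iInter fun h => isClosed_iInter fun g => isClosed_eq ?_ ?_
    · exact continuous_of_discreteTopology.comp
        ((continuous_apply g).comp ((continuous_apply N₁).comp continuous_fst))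
    · exact (continuous_apply g).comp ((continuous_apply N₂).comp continuous_fst)
  · show IsClosed ((fun p : FamX G m G'' => (p.1 N', p.2 i N')) ⁻¹'
      {q : (G → G'' ⧸ N'.1) × (G'' ⧸ N'.1) |
        ∃ hf : IsHomFun q.1, (H i).map (MonoidHom.mk' q.1 hf) =
          Subgroup.map (MulAut.conj q.2).toMonoidHom
            ((H' i).map (QuotientGroup.mk' N'.1))})
    refine IsClosed.preimage (Continuous.prodMk
      ((continuous_apply N').comp continuous_fst)
      ((continuous_apply N').comp ((continuous_apply i).comp continuous_snd))) ?_
    refine Set.Finite.isClosed (Set.Finite.subset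
      ((setFinite_homFun G _).prod Set.finite_univ) ?_)
    rintro q ⟨hf, -⟩
    exact ⟨hf, trivial⟩
  · have : famCond G m H H' (Sum.inr (Sum.inr (Sum.inr (i, N₁, N₂)))) =
        ⋂ (h : N₁.1 ≤ N₂.1),
          {p : FamX G m G'' | qmapHom N₁ N₂ h (p.2 i N₁) = p.2 i N₂} := by
      ext p
      simp only [famCond, Set.mem_iInter, Set.mem_setOf_eq]
    rw [this]
    refine isClosed_iInter fun h => isClosed_eq ?_ ?_
    · exact continuous_of_discreteTopology.comp
        ((continuous_apply N₁).comp ((continuous_apply i).comp continuous_snd))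
    · exact (continuous_apply N₂).comp ((continuous_apply i).comp continuous_snd)

open Classical in
/-- The levels mentioned by a constraint. -/
noncomputable def famLevels {m : ℕ} : FamI m G'' → Finset (FIN G'')
  | Sum.inl N' => {N'}
  | Sum.inr (Sum.inl (N₁, N₂)) => {N₁, N₂}
  | Sum.inr (Sum.inr (Sum.inl (_, N'))) => {N'}
  | Sum.inr (Sum.inr (Sum.inr (_, N₁, N₂))) => {N₁, N₂}

theorem famCond_nonempty [Group.FG G]
    (hyp : ∀ V : FIN G'', ∃ π : G →* G'' ⧸ V.1, Function.Surjective π ∧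
      ∀ i : Fin m, ∃ c : G'' ⧸ V.1,
        (H' i).map (QuotientGroup.mk' V.1) =
          Subgroup.map (MulAut.conj c).toMonoidHom ((H i).map π))
    (t : Finset (FamI m G'')) : (⋂ i ∈ t, famCond G m H H' i).Nonempty := by
  classical
  set T' : Finset (FIN G'') := t.biUnion famLevels with hT'
  have hnorm : (⨅ N' ∈ T', N'.1 : Subgroup G'').Normal :=
    normal_iInf' fun N => normal_iInf' fun _ => N.2.1
  have hfi : (⨅ N' ∈ T', N'.1 : Subgroup G'').FiniteIndex :=
    Subgroup.finiteIndex_iInf' (fun N : FIN G'' => N.1) (fun N _ => N.2.2)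
  set V : FIN G'' := ⟨⨅ N' ∈ T', N'.1, hnorm, hfi⟩ with hV
  have hVle : ∀ N' ∈ T', V.1 ≤ N'.1 := fun N' hmem =>
    biInf_le (fun N' : FIN G'' => N'.1) hmem
  obtain ⟨π, hπsurj, hπconj⟩ := hyp V
  choose cbar hcbar using hπconj
  refine ⟨(fun N' => if h : V.1 ≤ N'.1 then (fun g => qmapHom V N' h (π g)) else fun _ => 1,
    fun i N' => if h : V.1 ≤ N'.1 then qmapHom V N' h ((cbar i)⁻¹) else 1), ?_⟩
  rw [Set.mem_iInter₂]
  intro i hi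
  have hmemT' : ∀ N' ∈ famLevels i, N' ∈ T' := fun N' hN' =>
    Finset.mem_biUnion.mpr ⟨i, hi, hN'⟩
  rcases i with N' | ⟨N₁, N₂⟩ | ⟨i, N'⟩ | ⟨i, N₁, N₂⟩
  · have hN' : V.1 ≤ N'.1 := hVle N' (hmemT' N' (by simp [famLevels]))
    refine ⟨?_, ?_⟩ <;> simp only [dif_pos hN']
    · intro x y
      simp [map_mul]
    · exact (qmapHom_surjective V N' hN').comp hπsurj
  · have h1 : V.1 ≤ N₁.1 := hVle N₁ (hmemT' N₁ (by simp [famLevels]))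
    have h2 : V.1 ≤ N₂.1 := hVle N₂ (hmemT' N₂ (by simp [famLevels]))
    intro h g
    simp only [dif_pos h1, dif_pos h2]
    exact qmapHom_trans h1 h (π g)
  · have hN' : V.1 ≤ N'.1 := hVle N' (hmemT' N' (by simp [famLevels]))
    show ∃ hf, _
    simp only [dif_pos hN']
    refine ⟨fun x y => by simp [map_mul], ?_⟩
    have hmk : MonoidHom.mk' (fun g => qmapHom V N' hN' (π g))
        (fun x y => by simp [map_mul]) = (qmapHom V N' hN').comp π := by
      ext g
      rfl
    have hinner : Subgroup.map (qmapHom V N' hN')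
        (Subgroup.map (QuotientGroup.mk' V.1) (H' i)) =
          Subgroup.map (QuotientGroup.mk' N'.1) (H' i) := by
      rw [Subgroup.map_map, qmapHom_comp_mk]
    rw [hmk, ← Subgroup.map_map, conj_flip (hcbar i), map_conj_comm, hinner]
  · have h1 : V.1 ≤ N₁.1 := hVle N₁ (hmemT' N₁ (by simp [famLevels]))
    have h2 : V.1 ≤ N₂.1 := hVle N₂ (hmemT' N₂ (by simp [famLevels]))
    intro h
    simp only [dif_pos h1, dif_pos h2]
    exact qmapHom_trans h1 h ((cbar i)⁻¹)

theorem exists_global_family [Group.FG G]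
    (hyp : ∀ V : FIN G'', ∃ π : G →* G'' ⧸ V.1, Function.Surjective π ∧
      ∀ i : Fin m, ∃ c : G'' ⧸ V.1,
        (H' i).map (QuotientGroup.mk' V.1) =
          Subgroup.map (MulAut.conj c).toMonoidHom ((H i).map π)) :
    ∃ (ψ : ∀ N' : FIN G'', G →* G'' ⧸ N'.1) (cc : Fin m → ∀ N' : FIN G'', G'' ⧸ N'.1),
      (∀ (N' M' : FIN G'') (h : N'.1 ≤ M'.1) (g : G), qmapHom N' M' h (ψ N' g) = ψ M' g) ∧
      (∀ N', Function.Surjective (ψ N')) ∧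
      (∀ (i : Fin m) (N' M' : FIN G'') (h : N'.1 ≤ M'.1),
        qmapHom N' M' h (cc i N') = cc i M') ∧
      (∀ (i : Fin m) (N' : FIN G''), (H i).map (ψ N') =
        Subgroup.map (MulAut.conj (cc i N')).toMonoidHom
          ((H' i).map (QuotientGroup.mk' N'.1))) := by
  classical
  have hdir : Directed (· ⊇ ·) (fun t : Finset (FamI m G'') => ⋂ i ∈ t, famCond G m H H' i) := by
    intro s t
    refine ⟨s ∪ t, ?_, ?_⟩ <;> intro p hp <;> rw [Set.mem_iInter₂] at hp ⊢ <;>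
      intro i hi <;> exact hp i (Finset.mem_union.mpr (by first | exact Or.inl hi | exact Or.inr hi))
  have hcl : ∀ t : Finset (FamI m G''), IsClosed (⋂ i ∈ t, famCond G m H H' i) :=
    fun t => isClosed_biInter fun i _ => famCond_isClosed G m H H' i
  obtain ⟨p, hp⟩ := IsCompact.nonempty_iInter_of_directed_nonempty_isCompact_isClosed
    _ hdir (famCond_nonempty G m H H' hyp) (fun t => (hcl t).isCompact) hcl
  have hpC : ∀ i : FamI m G'', p ∈ famCond G m H H' i := by
    intro i
    have := Set.mem_iInter.mp hp {i}
    simpa using this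
  refine ⟨fun N' => MonoidHom.mk' (p.1 N') (hpC (Sum.inl N')).1, p.2, ?_, ?_, ?_, ?_⟩
  · intro N' M' h g
    exact (hpC (Sum.inr (Sum.inl (N', M')))) h g
  · intro N'
    exact (hpC (Sum.inl N')).2
  · intro i N' M' h
    exact (hpC (Sum.inr (Sum.inr (Sum.inr (i, N', M'))))) h
  · intro i N'
    obtain ⟨hf, heq⟩ := hpC (Sum.inr (Sum.inr (Sum.inl (i, N'))))
    exact heq

end Family

section Glue

variable {G : Type u} [Group G]

theorem proj_surjective (N : FIN G) : Function.Surjective (proj N) := fun q => by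
  obtain ⟨g, hg⟩ := QuotientGroup.mk_surjective q
  exact ⟨iota G g, hg⟩

theorem map_closure_eq {Q : Type*} [Group Q] [TopologicalSpace Q] [DiscreteTopology Q]
    (F : completionSubgroup G →* Q) (hF : Continuous F)
    (K : Subgroup (completionSubgroup G)) :
    Subgroup.map F K.topologicalClosure = Subgroup.map F K := by
  apply SetLike.coe_injective
  rw [Subgroup.coe_map, Subgroup.coe_map, Subgroup.topologicalClosure_coe]
  exact image_closure_discrete hF _

theorem closed_subgroup_eq_of_proj {A B : Subgroup (completionSubgroup G)}
    (hAc : IsCompact (A : Set (completionSubgroup G)))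
    (hAcl : IsClosed (A : Set (completionSubgroup G)))
    (hBc : IsCompact (B : Set (completionSubgroup G)))
    (hBcl : IsClosed (B : Set (completionSubgroup G)))
    (h : ∀ N : FIN G, Subgroup.map (proj N) A = Subgroup.map (proj N) B) : A = B := by
  ext x
  constructor
  · intro hx
    apply mem_of_forall_proj hBc hBcl
    intro N
    have hmem : proj N x ∈ Subgroup.map (proj N) B := by
      rw [← h N]; exact ⟨x, hx, rfl⟩
    obtain ⟨b, hb, hbx⟩ := hmem
    exact ⟨b, hb, hbx⟩
  · intro hx
    apply mem_of_forall_proj hAc hAcl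
    intro N
    have hmem : proj N x ∈ Subgroup.map (proj N) A := by
      rw [h N]; exact ⟨x, hx, rfl⟩
    obtain ⟨a, ha, hax⟩ := hmem
    exact ⟨a, ha, hax⟩

example {A B : Type} [Group A] [Group B] (φ : A →* B) (h : Function.Surjective φ) (g : A) :
    QuotientGroup.quotientKerEquivOfSurjective φ h (QuotientGroup.mk g) = φ g := rfl

end Glue

/-- for finitely generated groups `G, G'` with marked subgroups
`H₁, …, Hₘ` and `H₁', …, Hₘ'`, the collections of finite quotients marked with the
(conjugacy classes of the) images of the marked subgroups coincide if and only if there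
is an isomorphism of profinite completions (as topological groups) carrying the closure
of each `Hᵢ` to a conjugate of the closure of `Hᵢ'`. -/
theorem marked_finite_quotients_iff_profinite_iso
    (G G' : Type u) [Group G] [Group G'] [Group.FG G] [Group.FG G']
    (m : ℕ) (H : Fin m → Subgroup G) (H' : Fin m → Subgroup G') :
    ((∀ (Q : Type u) [Group Q] [Finite Q] (π : G →* Q), Function.Surjective π →
        ∃ π' : G' →* Q, Function.Surjective π' ∧ ∀ i : Fin m, ∃ c : Q,
          (H i).map π =
            Subgroup.map (MulAut.conj c).toMonoidHom ((H' i).map π')) ∧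
     (∀ (Q : Type u) [Group Q] [Finite Q] (π' : G' →* Q), Function.Surjective π' →
        ∃ π : G →* Q, Function.Surjective π ∧ ∀ i : Fin m, ∃ c : Q,
          (H' i).map π' =
            Subgroup.map (MulAut.conj c).toMonoidHom ((H i).map π)))
    ↔ ∃ e : completionSubgroup G ≃* completionSubgroup G',
        Continuous (⇑e) ∧ Continuous (⇑e.symm) ∧
        ∀ i : Fin m, ∃ c : completionSubgroup G',
          Subgroup.map e.toMonoidHom (((H i).map (iota G)).topologicalClosure) =
            Subgroup.map (MulAut.conj c).toMonoidHom
              (((H' i).map (iota G')).topologicalClosure) := by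
  constructor
  · rintro ⟨hyp1, hyp2⟩
    -- build the family G → (quotients of G')
    have hypF : ∀ V : FIN G', ∃ π : G →* G' ⧸ V.1, Function.Surjective π ∧
        ∀ i : Fin m, ∃ c : G' ⧸ V.1,
          (H' i).map (QuotientGroup.mk' V.1) =
            Subgroup.map (MulAut.conj c).toMonoidHom ((H i).map π) := by
      intro V
      obtain ⟨π, hπs, hπc⟩ := hyp2 (G' ⧸ V.1) (QuotientGroup.mk' V.1)
        (QuotientGroup.mk'_surjective V.1)
      exact ⟨π, hπs, hπc⟩
    obtain ⟨ψ, cc, hψcompat, hψsurj, hcccompat, hccconj⟩ :=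
      exists_global_family G m H H' hypF
    have hypB : ∀ V : FIN G, ∃ π : G' →* G ⧸ V.1, Function.Surjective π ∧
        ∀ i : Fin 0, ∃ c : G ⧸ V.1,
          ((Fin.elim0 i : Subgroup G)).map (QuotientGroup.mk' V.1) =
            Subgroup.map (MulAut.conj c).toMonoidHom
              (((Fin.elim0 i : Subgroup G')).map π) := by
      intro V
      obtain ⟨π, hπs, -⟩ := hyp1 (G ⧸ V.1) (QuotientGroup.mk' V.1)
        (QuotientGroup.mk'_surjective V.1)
      exact ⟨π, hπs, fun i => i.elim0⟩
    obtain ⟨ψ', -, hψ'compat, hψ'surj, -, -⟩ :=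
      exists_global_family G' 0 Fin.elim0 Fin.elim0 hypB
    set f := limMap ψ (fun N M h g => hψcompat N M h g) with hf
    set g := limMap ψ' (fun N M h x => hψ'compat N M h x) with hg
    have hfc : Continuous ⇑f := continuous_limMap _ _
    have hgc : Continuous ⇑g := continuous_limMap _ _
    have hfs : Function.Surjective ⇑f := surjective_limMap _ _ hψsurj
    have hgs : Function.Surjective ⇑g := surjective_limMap _ _ hψ'surj
    have hcomp_inj : Function.Injective ⇑(g.comp f) :=
      injective_of_continuous_surjective (g.comp f)
        (by rw [MonoidHom.coe_comp]; exact hgc.comp hfc)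
        (by rw [MonoidHom.coe_comp]; exact hgs.comp hfs)
    have hfinj : Function.Injective ⇑f := by
      have h2 : Function.Injective (⇑g ∘ ⇑f) := by
        rw [← MonoidHom.coe_comp]; exact hcomp_inj
      exact Function.Injective.of_comp h2
    set e := MulEquiv.ofBijective f ⟨hfinj, hfs⟩ with he
    have hecont : Continuous ⇑e := hfc
    have hesymm : Continuous ⇑e.symm :=
      (Continuous.homeoOfEquivCompactToT2 (f := e.toEquiv) hecont).symm.continuous
    refine ⟨e, hecont, hesymm, ?_⟩
    intro i
    set ci : completionSubgroup G' :=
      ⟨fun N' => cc i N', fun N M h => hcccompat i N M h⟩ with hci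
    refine ⟨ci, ?_⟩
    have hKcl : IsClosed ((((H i).map (iota G)).topologicalClosure :
        Subgroup (completionSubgroup G)) : Set (completionSubgroup G)) := by
      rw [Subgroup.topologicalClosure_coe]
      exact isClosed_closure
    have hK'cl : IsClosed ((((H' i).map (iota G')).topologicalClosure :
        Subgroup (completionSubgroup G')) : Set (completionSubgroup G')) := by
      rw [Subgroup.topologicalClosure_coe]
      exact isClosed_closure
    have hconjc : Continuous ⇑(MulAut.conj ci).toMonoidHom := by
      have hcoe : ⇑(MulAut.conj ci).toMonoidHom = fun x => ci * x * ci⁻¹ := rfl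
      rw [hcoe]
      exact (continuous_mul_left ci).mul continuous_const
    have hAc : IsCompact ((Subgroup.map e.toMonoidHom
        (((H i).map (iota G)).topologicalClosure) : Subgroup _) :
          Set (completionSubgroup G')) := by
      rw [Subgroup.coe_map]
      exact (hKcl.isCompact).image hecont
    have hBc : IsCompact ((Subgroup.map (MulAut.conj ci).toMonoidHom
        (((H' i).map (iota G')).topologicalClosure) : Subgroup _) :
          Set (completionSubgroup G')) := by
      rw [Subgroup.coe_map]
      exact (hK'cl.isCompact).image hconjc
    apply closed_subgroup_eq_of_proj hAc hAc.isClosed hBc hBc.isClosed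
    intro N'
    have hL : Subgroup.map (proj N') (Subgroup.map e.toMonoidHom
        (((H i).map (iota G)).topologicalClosure)) = (H i).map (ψ N') := by
      rw [Subgroup.map_map,
        map_closure_eq ((proj N').comp e.toMonoidHom) ((continuous_proj N').comp hecont),
        Subgroup.map_map]
      exact congrArg (fun F : G →* G' ⧸ N'.1 => Subgroup.map F (H i))
        (MonoidHom.ext fun h => rfl)
    have hR : Subgroup.map (proj N') (Subgroup.map (MulAut.conj ci).toMonoidHom
        (((H' i).map (iota G')).topologicalClosure)) =
          Subgroup.map (MulAut.conj (cc i N')).toMonoidHom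
            ((H' i).map (QuotientGroup.mk' N'.1)) := by
      have hstep : Subgroup.map (proj N') (((H' i).map (iota G')).topologicalClosure) =
          (H' i).map (QuotientGroup.mk' N'.1) := by
        rw [map_closure_eq (proj N') (continuous_proj N'), Subgroup.map_map]
        exact congrArg (fun F : G' →* G' ⧸ N'.1 => Subgroup.map F (H' i))
          (MonoidHom.ext fun h => rfl)
      have hcc : proj N' ci = cc i N' := rfl
      calc Subgroup.map (proj N') (Subgroup.map (MulAut.conj ci).toMonoidHom
            (((H' i).map (iota G')).topologicalClosure))
          = Subgroup.map (MulAut.conj (proj N' ci)).toMonoidHom (Subgroup.map (proj N')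
              (((H' i).map (iota G')).topologicalClosure)) := map_conj_comm _ _ _
        _ = Subgroup.map (MulAut.conj (cc i N')).toMonoidHom
              ((H' i).map (QuotientGroup.mk' N'.1)) := by rw [hcc, hstep]
    rw [hL, hR]
    exact hccconj i N'
  · rintro ⟨e, hec, hesc, hconj⟩
    constructor
    · -- given a finite quotient of G, produce a matching one of G'
      intro Q _ _ π hπ
      set K := kerFIN π with hK
      set φ := QuotientGroup.quotientKerEquivOfSurjective π hπ with hφ
      set P : completionSubgroup G' →* G ⧸ K.1 :=
        (proj K).comp e.symm.toMonoidHom with hP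
      set π' : G' →* Q := φ.toMonoidHom.comp (P.comp (iota G')) with hπ'def
      have hPc : Continuous ⇑P := (continuous_proj K).comp hesc
      have hFs : Function.Surjective ⇑P :=
        (proj_surjective K).comp e.symm.surjective
      have key : ⇑P '' Set.range ⇑(iota G') = Set.univ := by
        have h1 : closure (Set.range ⇑(iota G')) = Set.univ := denseRange_iota.closure_eq
        have h2 := image_closure_discrete hPc (Set.range ⇑(iota G'))
        rw [h1] at h2
        calc ⇑P '' Set.range ⇑(iota G') = ⇑P '' Set.univ := h2.symm
          _ = Set.range ⇑P := Set.image_univ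
          _ = Set.univ := hFs.range_eq
      have hπ's : Function.Surjective ⇑π' := by
        intro q
        have hq : φ.symm q ∈ ⇑P '' Set.range ⇑(iota G') := by
          rw [key]; trivial
        obtain ⟨_, ⟨g', rfl⟩, hg⟩ := hq
        refine ⟨g', ?_⟩
        show φ (P (iota G' g')) = q
        rw [hg, MulEquiv.apply_symm_apply]
      refine ⟨π', hπ's, ?_⟩
      intro i
      obtain ⟨c, hc⟩ := hconj i
      have hPe : P.comp e.toMonoidHom = proj K := by
        refine MonoidHom.ext fun x => ?_
        show proj K (e.symm (e x)) = proj K x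
        rw [MulEquiv.symm_apply_apply]
      have hφmk : φ.toMonoidHom.comp ((proj K).comp (iota G)) = π :=
        MonoidHom.ext fun x => rfl
      have hmain : (H' i).map π' =
          Subgroup.map (MulAut.conj (φ (P c⁻¹))).toMonoidHom ((H i).map π) := by
        calc (H' i).map π'
            = Subgroup.map φ.toMonoidHom (Subgroup.map P ((H' i).map (iota G'))) := by
              symm
              erw [Subgroup.map_map, Subgroup.map_map]
              exact congrArg (fun F : G' →* Q => Subgroup.map F (H' i))
                (MonoidHom.ext fun x => rfl)
          _ = Subgroup.map φ.toMonoidHom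
              (Subgroup.map P (((H' i).map (iota G')).topologicalClosure)) := by
              erw [map_closure_eq P hPc]; rfl
          _ = Subgroup.map φ.toMonoidHom (Subgroup.map P
              (Subgroup.map (MulAut.conj c⁻¹).toMonoidHom
                (Subgroup.map e.toMonoidHom (((H i).map (iota G)).topologicalClosure)))) := by
              rw [← conj_flip hc]
          _ = Subgroup.map φ.toMonoidHom
              (Subgroup.map (MulAut.conj (P c⁻¹)).toMonoidHom (Subgroup.map P
                (Subgroup.map e.toMonoidHom (((H i).map (iota G)).topologicalClosure)))) :=
              congrArg (fun S => Subgroup.map φ.toMonoidHom S) (map_conj_comm _ _ _)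
          _ = Subgroup.map φ.toMonoidHom
              (Subgroup.map (MulAut.conj (P c⁻¹)).toMonoidHom (Subgroup.map (proj K)
                (((H i).map (iota G)).topologicalClosure))) := by
              have hPeK : Subgroup.map P (Subgroup.map e.toMonoidHom
                  (((H i).map (iota G)).topologicalClosure)) =
                    Subgroup.map (proj K) (((H i).map (iota G)).topologicalClosure) := by
                rw [Subgroup.map_map, hPe]
              rw [hPeK]
          _ = Subgroup.map φ.toMonoidHom
              (Subgroup.map (MulAut.conj (P c⁻¹)).toMonoidHom (Subgroup.map (proj K)
                ((H i).map (iota G)))) := by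
              rw [map_closure_eq (proj K) (continuous_proj K)]
          _ = Subgroup.map (MulAut.conj (φ (P c⁻¹))).toMonoidHom
              (Subgroup.map φ.toMonoidHom (Subgroup.map (proj K)
                ((H i).map (iota G)))) := map_conj_comm _ _ _
          _ = Subgroup.map (MulAut.conj (φ (P c⁻¹))).toMonoidHom ((H i).map π) := by
              have hstep : Subgroup.map φ.toMonoidHom (Subgroup.map (proj K)
                  ((H i).map (iota G))) = (H i).map π := by
                erw [Subgroup.map_map, Subgroup.map_map]
                exact congrArg (fun F : G →* Q => Subgroup.map F (H i))
                  (MonoidHom.ext fun x => rfl)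
              rw [hstep]
      exact ⟨(φ (P c⁻¹))⁻¹, conj_flip hmain⟩
    · -- given a finite quotient of G', produce a matching one of G
      intro Q _ _ π' hπ'
      set K' := kerFIN π' with hK'
      set φ' := QuotientGroup.quotientKerEquivOfSurjective π' hπ' with hφ'
      set P' : completionSubgroup G →* G' ⧸ K'.1 :=
        (proj K').comp e.toMonoidHom with hP'
      set π : G →* Q := φ'.toMonoidHom.comp (P'.comp (iota G)) with hπdef
      have hP'c : Continuous ⇑P' := (continuous_proj K').comp hec
      have hF's : Function.Surjective ⇑P' :=
        (proj_surjective K').comp e.surjective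
      have key : ⇑P' '' Set.range ⇑(iota G) = Set.univ := by
        have h1 : closure (Set.range ⇑(iota G)) = Set.univ := denseRange_iota.closure_eq
        have h2 := image_closure_discrete hP'c (Set.range ⇑(iota G))
        rw [h1] at h2
        calc ⇑P' '' Set.range ⇑(iota G) = ⇑P' '' Set.univ := h2.symm
          _ = Set.range ⇑P' := Set.image_univ
          _ = Set.univ := hF's.range_eq
      have hπs : Function.Surjective ⇑π := by
        intro q
        have hq : φ'.symm q ∈ ⇑P' '' Set.range ⇑(iota G) := by
          rw [key]; trivial
        obtain ⟨_, ⟨g', rfl⟩, hg⟩ := hq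
        refine ⟨g', ?_⟩
        show φ' (P' (iota G g')) = q
        rw [hg, MulEquiv.apply_symm_apply]
      refine ⟨π, hπs, ?_⟩
      intro i
      obtain ⟨c, hc⟩ := hconj i
      have hφ'mk : φ'.toMonoidHom.comp ((proj K').comp (iota G')) = π' :=
        MonoidHom.ext fun x => rfl
      have hmain : (H i).map π =
          Subgroup.map (MulAut.conj (φ' (proj K' c))).toMonoidHom ((H' i).map π') := by
        calc (H i).map π
            = Subgroup.map φ'.toMonoidHom (Subgroup.map P' ((H i).map (iota G))) := by
              symm
              erw [Subgroup.map_map, Subgroup.map_map]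
              exact congrArg (fun F : G →* Q => Subgroup.map F (H i))
                (MonoidHom.ext fun x => rfl)
          _ = Subgroup.map φ'.toMonoidHom
              (Subgroup.map P' (((H i).map (iota G)).topologicalClosure)) := by
              erw [map_closure_eq P' hP'c]; rfl
          _ = Subgroup.map φ'.toMonoidHom (Subgroup.map (proj K')
              (Subgroup.map e.toMonoidHom (((H i).map (iota G)).topologicalClosure))) := by
              have hsplit : Subgroup.map P' (((H i).map (iota G)).topologicalClosure) =
                  Subgroup.map (proj K') (Subgroup.map e.toMonoidHom
                    (((H i).map (iota G)).topologicalClosure)) := by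
                rw [Subgroup.map_map]
              erw [hsplit]; rfl
          _ = Subgroup.map φ'.toMonoidHom (Subgroup.map (proj K')
              (Subgroup.map (MulAut.conj c).toMonoidHom
                (((H' i).map (iota G')).topologicalClosure))) := by
              rw [hc]
          _ = Subgroup.map φ'.toMonoidHom
              (Subgroup.map (MulAut.conj (proj K' c)).toMonoidHom (Subgroup.map (proj K')
                (((H' i).map (iota G')).topologicalClosure))) :=
              congrArg (fun S => Subgroup.map φ'.toMonoidHom S) (map_conj_comm _ _ _)
          _ = Subgroup.map φ'.toMonoidHom
              (Subgroup.map (MulAut.conj (proj K' c)).toMonoidHom (Subgroup.map (proj K')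
                ((H' i).map (iota G')))) := by
              rw [map_closure_eq (proj K') (continuous_proj K')]
          _ = Subgroup.map (MulAut.conj (φ' (proj K' c))).toMonoidHom
              (Subgroup.map φ'.toMonoidHom (Subgroup.map (proj K')
                ((H' i).map (iota G')))) := map_conj_comm _ _ _
          _ = Subgroup.map (MulAut.conj (φ' (proj K' c))).toMonoidHom ((H' i).map π') := by
              have hstep : Subgroup.map φ'.toMonoidHom (Subgroup.map (proj K')
                  ((H' i).map (iota G'))) = (H' i).map π' := by
                erw [Subgroup.map_map, Subgroup.map_map]
                exact congrArg (fun F : G' →* Q => Subgroup.map F (H' i))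
                  (MonoidHom.ext fun x => rfl)
              rw [hstep]
      exact ⟨(φ' (proj K' c))⁻¹, conj_flip hmain⟩
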